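/- Let A be a commutative ring and L a finitely generated ideal such that A/L is a flat A-module. Then L is generated by an idempotent element: there exists e ∈ L with e² = e and L = eA. Consequently A ≅ L × (A/L) and Spec(A/L) → Spec(A) is an open (and closed) immersion. -/

import Mathlib

/-!
STATEMENT 2: Let `A` be a commutative ring and `L` a finitely generated ideal such that
`A/L` is a flat `A`-module.  Then `L` is generated by an idempotent element: there exists
`e ∈ L` with `e² = e` and `L = eA`.  Consequently `A ≅ L × (A/L)` and
`Spec(A/L) → Spec(A)` is an open (and closed) immersion.
-/

universe u

/-- Flatness of `A ⧸ L` forces `L` to be an idempotent ideal. -/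
lemma statement2_aux_sq (A : Type u) [CommRing A] (L : Ideal A) (hfg : L.FG)
    (hflat : Module.Flat A (A ⧸ L)) : L * L = L := by
  refine le_antisymm Ideal.mul_le_right fun x hx => ?_
  have hinj := Module.Flat.iff_lift_lsmul_comp_subtype_injective.mp hflat hfg
  have h0 : (⟨x, hx⟩ : L) ⊗ₜ[A] ((1 : A ⧸ L)) = 0 := by
    apply hinj
    simp only [map_zero, TensorProduct.lift.tmul, LinearMap.comp_apply,
      Submodule.subtype_apply, LinearMap.lsmul_apply]
    have hs : x • ((Ideal.Quotient.mk L) (1 : A)) = (Ideal.Quotient.mk L) (x • (1 : A)) :=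
      (Submodule.Quotient.mk_smul L x 1).symm
    show x • ((Ideal.Quotient.mk L) (1 : A)) = 0
    rw [hs, smul_eq_mul, mul_one, Ideal.Quotient.eq_zero_iff_mem]
    exact hx
  have h1 : (1 : A ⧸ L) = Ideal.Quotient.mk L 1 := rfl
  have h2 : ((TensorProduct.tensorQuotEquivQuotSMul (↥L) L)
      ((⟨x, hx⟩ : L) ⊗ₜ[A] (1 : A ⧸ L))) = 0 := by
    rw [h0]
    exact (TensorProduct.tensorQuotEquivQuotSMul (↥L) L).toLinearMap.map_zero
  rw [h1, TensorProduct.tensorQuotEquivQuotSMul_tmul_mk, one_smul,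
    Submodule.Quotient.mk_eq_zero] at h2
  have := (Submodule.mem_smul_top_iff L L ⟨x, hx⟩).mp h2
  rwa [smul_eq_mul] at this

theorem statement2 (A : Type u) [CommRing A] (L : Ideal A) (hfg : L.FG)
    (hflat : Module.Flat A (A ⧸ L)) :
    (∃ e ∈ L, e * e = e ∧ L = Ideal.span {e}) ∧
    Nonempty (A ≃ₗ[A] (↥L × (A ⧸ L))) ∧
    Topology.IsOpenEmbedding (PrimeSpectrum.comap (Ideal.Quotient.mk L)) ∧
    IsClosed (Set.range (PrimeSpectrum.comap (Ideal.Quotient.mk L))) := by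
  have hidem : IsIdempotentElem L := statement2_aux_sq A L hfg hflat
  obtain ⟨e, he, hLe⟩ := (L.isIdempotentElem_iff_of_fg hfg).mp hidem
  have hLe' : L = Ideal.span {e} := by
    rw [hLe]
  have heL : e ∈ L := hLe' ▸ Ideal.mem_span_singleton_self e
  -- the linear equivalence `A ≃ L × A ⧸ L`
  have hmemL : ∀ a : A, a * e ∈ L := fun a =>
    hLe' ▸ Ideal.mem_span_singleton.mpr (dvd_mul_left e a)
  let f : A →ₗ[A] (↥L × (A ⧸ L)) :=
    { toFun := fun a => (⟨a * e, hmemL a⟩, Ideal.Quotient.mk L a)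
      map_add' := fun a b => by
        refine Prod.ext (Subtype.ext ?_) ?_
        · show (a + b) * e = a * e + b * e; ring
        · exact map_add (Ideal.Quotient.mk L) a b
      map_smul' := fun a b => by
        refine Prod.ext (Subtype.ext ?_) ?_
        · show a * b * e = a * (b * e); ring
        · rfl }
  have hbij : Function.Bijective f := by
    constructor
    · intro a b hab
      have h1 : a * e = b * e := congrArg (Subtype.val ∘ Prod.fst) hab
      have h2 : a - b ∈ L := (Ideal.Quotient.eq (I := L)).mp (congrArg Prod.snd hab)
      rw [hLe'] at h2
      obtain ⟨c, hc⟩ := Ideal.mem_span_singleton'.mp h2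
      have h3 : a - b = (a - b) * e := by
        rw [← hc, mul_assoc, he.eq, hc]
      have h4 : a - b = 0 := by
        rwa [sub_mul, h1, sub_self] at h3
      exact sub_eq_zero.mp h4
    · rintro ⟨⟨x, hxL⟩, b⟩
      obtain ⟨b, rfl⟩ := Ideal.Quotient.mk_surjective b
      obtain ⟨c, hc⟩ := Ideal.mem_span_singleton'.mp (hLe' ▸ hxL)
      refine ⟨x + b * (1 - e), ?_⟩
      have hxe : x * e = x := by rw [← hc, mul_assoc, he.eq]
      have h1 : (x + b * (1 - e)) * e = x := by
        calc (x + b * (1 - e)) * e = x * e + b * (e - e * e) := by ring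
        _ = x := by rw [he.eq, sub_self, mul_zero, add_zero, hxe]
      have h2 : Ideal.Quotient.mk L (x + b * (1 - e)) = Ideal.Quotient.mk L b := by
        rw [Ideal.Quotient.eq]
        have : x + b * (1 - e) - b = x - b * e := by ring
        rw [this]
        exact sub_mem hxL (hmemL b)
      exact Prod.ext (Subtype.ext h1) h2
  refine ⟨⟨e, heL, he.eq, hLe'⟩, ⟨LinearEquiv.ofBijective f hbij⟩, ?_, ?_⟩
  · have hce := PrimeSpectrum.isClosedEmbedding_comap_of_surjective (A ⧸ L)
      (Ideal.Quotient.mk L) Ideal.Quotient.mk_surjective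
    refine ⟨hce.toIsEmbedding, ?_⟩
    rw [range_comap_of_surjective _ _ Ideal.Quotient.mk_surjective,
      Ideal.mk_ker, hLe', PrimeSpectrum.zeroLocus_span,
      PrimeSpectrum.zeroLocus_eq_basicOpen_of_isIdempotentElem e he]
    exact (PrimeSpectrum.basicOpen (1 - e)).2
  · exact PrimeSpectrum.isClosed_range_comap_of_surjective _ _ Ideal.Quotient.mk_surjective
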